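/- If X, Y ∈ 𝓛_Q are comonotone random variables, i.e., (X(ω) − X(ω'))·(Y(ω) − Y(ω')) ≥ 0 for all ω, ω' ∈ Ω, then X + Y ∈ 𝓛_Q and ϱ_Q[X+Y] = ϱ_Q[X] + ϱ_Q[Y] (in [−∞,∞)). -/

import Mathlib

open MeasureTheory

/-- The distribution function `F_X(x) = P[X ≤ x]` of a random variable `X`. -/
noncomputable def distFun {Ω : Type*} [MeasurableSpace Ω] (P : Measure Ω) (X : Ω → ℝ) (x : ℝ) : ℝ :=
  (P {ω | X ω ≤ x}).toReal

/-- The (lower) quantile function `F^←_X(u) = inf {x | F_X(x) ≥ u}`. -/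
noncomputable def quantile {Ω : Type*} [MeasurableSpace Ω] (P : Measure Ω) (X : Ω → ℝ) (u : ℝ) : ℝ :=
  sInf {x : ℝ | u ≤ distFun P X x}

/-- A distortion function: an increasing, right-continuous `D : [0,1] → [0,1]`
with `D 0 = 0` and `sup_{u ∈ (0,1)} D u = 1`. -/
structure IsDistortion (D : ℝ → ℝ) : Prop where
  mapsTo : ∀ u ∈ Set.Icc (0:ℝ) 1, D u ∈ Set.Icc (0:ℝ) 1
  mono : ∀ ⦃a b : ℝ⦄, 0 ≤ a → a ≤ b → b ≤ 1 → D a ≤ D b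
  rightCont : ∀ u ∈ Set.Ico (0:ℝ) 1, ContinuousWithinAt D (Set.Icc u 1) u
  zero : D 0 = 0
  sup_one : sSup (D '' Set.Ioo 0 1) = 1

/-- `Q` is the probability measure on the Borel sets of `(0,1)` corresponding to
the distortion function `D`, i.e. `Q (a,b] = D b - D a` for `0 < a ≤ b < 1`. -/
def IsCorresponding (D : ℝ → ℝ) (Q : Measure ℝ) : Prop :=
  IsProbabilityMeasure Q ∧ Q (Set.Ioo (0:ℝ) 1) = 1 ∧
    ∀ a b : ℝ, 0 < a → a ≤ b → b < 1 → Q (Set.Ioc a b) = ENNReal.ofReal (D b - D a)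

/-- `X ∈ 𝓛_Q`, i.e. `∫_{(0,1)} (F^←_X(u))⁺ dQ(u) < ∞`. -/
def memLQ {Ω : Type*} [MeasurableSpace Ω] (P : Measure Ω) (Q : Measure ℝ) (X : Ω → ℝ) : Prop :=
  ∫⁻ u in Set.Ioo (0:ℝ) 1, ENNReal.ofReal (max (quantile P X u) 0) ∂Q < ⊤

/-- The quantile risk measure
`ϱ_Q[X] = ∫_{(0,1)} (F^←_X(u))⁺ dQ(u) - ∫_{(0,1)} (F^←_X(u))⁻ dQ(u)`, with values in `EReal`. -/
noncomputable def rho {Ω : Type*} [MeasurableSpace Ω] (P : Measure Ω) (Q : Measure ℝ)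
    (X : Ω → ℝ) : EReal :=
  ((∫⁻ u in Set.Ioo (0:ℝ) 1, ENNReal.ofReal (max (quantile P X u) 0) ∂Q) : EReal)
    - ((∫⁻ u in Set.Ioo (0:ℝ) 1, ENNReal.ofReal (max (-(quantile P X u)) 0) ∂Q) : EReal)


open Set

section QuantileFacts

variable {Ω : Type*} [MeasurableSpace Ω] (P : Measure Ω) [IsProbabilityMeasure P]

lemma distFun_mono' (X : Ω → ℝ) : Monotone (distFun P X) := fun x y hxy =>
  ENNReal.toReal_mono (measure_ne_top _ _)
    (measure_mono fun ω (h : X ω ≤ x) => h.trans hxy)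

lemma distFun_nonneg' (X : Ω → ℝ) (x : ℝ) : 0 ≤ distFun P X x := ENNReal.toReal_nonneg

lemma quantile_set_nonempty' (X : Ω → ℝ) {u : ℝ} (hu : u < 1) :
    {x : ℝ | u ≤ distFun P X x}.Nonempty := by
  rcases le_or_gt u 0 with hu0 | hu0
  · exact ⟨0, hu0.trans (distFun_nonneg' P X 0)⟩
  have hm : Monotone (fun n : ℕ => {ω | X ω ≤ (n : ℝ)}) := by
    intro n m hnm ω h
    simp only [mem_setOf_eq] at h ⊢
    have : (n : ℝ) ≤ (m : ℝ) := by exact_mod_cast hnm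
    linarith
  have hU : (⋃ n : ℕ, {ω | X ω ≤ (n : ℝ)}) = univ := by
    ext ω; simp only [mem_iUnion, mem_univ, iff_true, mem_setOf_eq]
    exact exists_nat_ge (X ω)
  have ht := tendsto_measure_iUnion_atTop (μ := P) hm
  rw [hU, measure_univ] at ht
  have hlt : ENNReal.ofReal u < 1 := ENNReal.ofReal_lt_one.2 hu
  obtain ⟨n, hn⟩ := (ht.eventually (eventually_gt_nhds hlt)).exists
  refine ⟨(n : ℝ), ?_⟩
  have := (ENNReal.ofReal_lt_iff_lt_toReal hu0.le (measure_ne_top _ _)).1 hn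
  exact this.le

lemma quantile_set_bddBelow' {X : Ω → ℝ} (hX : Measurable X) {u : ℝ} (hu : 0 < u) :
    BddBelow {x : ℝ | u ≤ distFun P X x} := by
  have ha : Antitone (fun n : ℕ => {ω | X ω ≤ -(n : ℝ)}) := by
    intro n m hnm ω h
    simp only [mem_setOf_eq] at h ⊢
    have : (n : ℝ) ≤ (m : ℝ) := by exact_mod_cast hnm
    linarith
  have hI : (⋂ n : ℕ, {ω | X ω ≤ -(n : ℝ)}) = ∅ := by
    ext ω; simp only [mem_iInter, mem_setOf_eq, mem_empty_iff_false, iff_false, not_forall, not_le]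
    obtain ⟨n, hn⟩ := exists_nat_gt (-(X ω))
    exact ⟨n, by linarith⟩
  have hmeas : ∀ n : ℕ, NullMeasurableSet {ω | X ω ≤ -(n : ℝ)} P := fun n =>
    (hX measurableSet_Iic).nullMeasurableSet
  have ht := tendsto_measure_iInter_atTop (μ := P) hmeas ha ⟨0, measure_ne_top _ _⟩
  rw [hI, measure_empty] at ht
  have hpos : (0 : ENNReal) < ENNReal.ofReal u := ENNReal.ofReal_pos.2 hu
  obtain ⟨n, hn⟩ := (ht.eventually (eventually_lt_nhds hpos)).exists
  refine ⟨-(n : ℝ), fun x hx => ?_⟩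
  by_contra h
  push_neg at h
  have h2 : u ≤ distFun P X (-(n : ℝ)) := le_trans hx (distFun_mono' P X h.le)
  have h3 : ENNReal.ofReal u ≤ P {ω | X ω ≤ -(n : ℝ)} := by
    calc ENNReal.ofReal u ≤ ENNReal.ofReal (distFun P X (-(n : ℝ))) :=
          ENNReal.ofReal_le_ofReal h2
      _ = P {ω | X ω ≤ -(n : ℝ)} := ENNReal.ofReal_toReal (measure_ne_top _ _)
  exact absurd hn (not_lt.2 h3)

lemma le_distFun_quantile' {X : Ω → ℝ} (hX : Measurable X) {u : ℝ} (hu : 0 < u) (hu1 : u < 1) :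
    u ≤ distFun P X (quantile P X u) := by
  have hne := quantile_set_nonempty' P X hu1
  have hbdd := quantile_set_bddBelow' P hX hu
  set q := quantile P X u with hq
  have key : ∀ n : ℕ, ENNReal.ofReal u ≤ P {ω | X ω ≤ q + 1 / (n + 1)} := by
    intro n
    have hpos : (0 : ℝ) < 1 / (n + 1) := by positivity
    have hq' : q = sInf {x : ℝ | u ≤ distFun P X x} := hq
    have hlt : sInf {x : ℝ | u ≤ distFun P X x} < q + 1 / (n + 1) := by
      rw [← hq']; linarith
    obtain ⟨x, hxS, hxlt⟩ := (csInf_lt_iff hbdd hne).1 hlt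
    have h1 : u ≤ distFun P X (q + 1 / (n + 1)) := le_trans hxS (distFun_mono' P X hxlt.le)
    calc ENNReal.ofReal u ≤ ENNReal.ofReal (distFun P X (q + 1 / (n + 1))) :=
          ENNReal.ofReal_le_ofReal h1
      _ = P {ω | X ω ≤ q + 1 / (n + 1)} := ENNReal.ofReal_toReal (measure_ne_top _ _)
  have hI : (⋂ n : ℕ, {ω | X ω ≤ q + 1 / (n + 1)}) = {ω | X ω ≤ q} := by
    ext ω; simp only [mem_iInter, mem_setOf_eq]
    constructor
    · intro h
      by_contra hq'
      push_neg at hq'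
      obtain ⟨n, hn⟩ := exists_nat_one_div_lt (show (0 : ℝ) < X ω - q by linarith)
      have := h n; linarith
    · intro h n
      have : (0 : ℝ) < 1 / (n + 1) := by positivity
      linarith
  have ha : Antitone (fun n : ℕ => {ω | X ω ≤ q + 1 / (n + 1)}) := by
    intro n m hnm ω h
    simp only [mem_setOf_eq] at h ⊢
    have hc : (n : ℝ) + 1 ≤ (m : ℝ) + 1 := by exact_mod_cast Nat.succ_le_succ hnm
    have : (1 : ℝ) / (m + 1) ≤ 1 / (n + 1) :=
      one_div_le_one_div_of_le (by positivity) hc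
    linarith
  have hmeas : ∀ n : ℕ, NullMeasurableSet {ω | X ω ≤ q + 1 / (n + 1)} P := fun n =>
    (hX measurableSet_Iic).nullMeasurableSet
  have ht := tendsto_measure_iInter_atTop (μ := P) hmeas ha ⟨0, measure_ne_top _ _⟩
  rw [hI] at ht
  have hle : ENNReal.ofReal u ≤ P {ω | X ω ≤ q} :=
    ge_of_tendsto ht (Filter.Eventually.of_forall key)
  have := ENNReal.toReal_mono (measure_ne_top _ _) hle
  rwa [ENNReal.toReal_ofReal hu.le] at this

/-- quantile of a monotone continuous transform. -/
lemma quantile_comp' {Z : Ω → ℝ} (hZ : Measurable Z) {f : ℝ → ℝ}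
    (hf : Monotone f) (hfc : Continuous f) {u : ℝ} (hu : 0 < u) (hu1 : u < 1) :
    quantile P (fun ω => f (Z ω)) u = f (quantile P Z u) := by
  set q := quantile P Z u with hqdef
  have hq : u ≤ distFun P Z q := le_distFun_quantile' P hZ hu hu1
  have hmem : u ≤ distFun P (fun ω => f (Z ω)) (f q) := by
    refine le_trans hq ?_
    refine ENNReal.toReal_mono (measure_ne_top _ _) (measure_mono ?_)
    intro ω h
    simp only [mem_setOf_eq] at h ⊢
    exact hf h
  have hlb : ∀ x ∈ {x : ℝ | u ≤ distFun P (fun ω => f (Z ω)) x}, f q ≤ x := by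
    intro x hx
    by_contra hqx
    push_neg at hqx
    set A := {z : ℝ | f z ≤ x} with hA
    have hA_sub : A ⊆ Iio q := by
      intro z hz
      by_contra h
      simp only [mem_Iio, not_lt] at h
      exact absurd (le_trans (hf h) hz) (not_le.2 hqx)
    have hA_ne : A.Nonempty := by
      by_contra h
      rw [not_nonempty_iff_eq_empty] at h
      have hempty : {ω | f (Z ω) ≤ x} = ∅ := by
        ext ω; simp only [mem_setOf_eq, mem_empty_iff_false, iff_false]
        intro hzx
        exact absurd (show Z ω ∈ A from hzx) (by simp [h])
      have : distFun P (fun ω => f (Z ω)) x = 0 := by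
        rw [distFun, hempty, measure_empty, ENNReal.toReal_zero]
      simp only [mem_setOf_eq] at hx
      rw [this] at hx
      exact absurd hx (not_le.2 hu)
    have hbddA : BddAbove A := ⟨q, fun z hz => (hA_sub hz).le⟩
    set c := sSup A with hc
    have hcA : c ∈ A := by
      have hcl : IsClosed (f ⁻¹' Iic x) := isClosed_Iic.preimage hfc
      have hmemc : c ∈ closure A := (isLUB_csSup hA_ne hbddA).mem_closure hA_ne
      have hsub : closure A ⊆ f ⁻¹' Iic x :=
        hcl.closure_subset_iff.2 fun z hz => hz
      exact hsub hmemc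
    have h1 : {ω | f (Z ω) ≤ x} ⊆ {ω | Z ω ≤ c} := fun ω h => le_csSup hbddA h
    have h2 : u ≤ distFun P Z c :=
      le_trans hx (ENNReal.toReal_mono (measure_ne_top _ _) (measure_mono h1))
    have h3 : q ≤ c := csInf_le (quantile_set_bddBelow' P hZ hu) h2
    exact absurd (hA_sub hcA) (not_lt.2 h3)
  exact le_antisymm (csInf_le ⟨f q, hlb⟩ hmem) (le_csInf ⟨f q, hmem⟩ hlb)

lemma quantile_monotoneOn' {X : Ω → ℝ} (hX : Measurable X) :
    MonotoneOn (quantile P X) (Ioo (0 : ℝ) 1) := by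
  intro a ha b hb hab
  exact csInf_le_csInf (quantile_set_bddBelow' P hX ha.1) (quantile_set_nonempty' P X hb.2)
    (fun x hx => le_trans hab hx)

end QuantileFacts

/-- If `X, Y ∈ 𝓛_Q` are comonotone, then `X + Y ∈ 𝓛_Q` and
`ϱ_Q[X+Y] = ϱ_Q[X] + ϱ_Q[Y]` in `[-∞,∞)`. -/
theorem rho_add_of_comonotone {Ω : Type*} [MeasurableSpace Ω]
    (P : Measure Ω) [IsProbabilityMeasure P] (D : ℝ → ℝ) (Q : Measure ℝ)
    (hD : IsDistortion D) (hQ : IsCorresponding D Q)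
    (X Y : Ω → ℝ) (hX : Measurable X) (hY : Measurable Y)
    (hXQ : memLQ P Q X) (hYQ : memLQ P Q Y)
    (hcom : ∀ ω ω' : Ω, 0 ≤ (X ω - X ω') * (Y ω - Y ω')) :
    memLQ P Q (fun ω => X ω + Y ω) ∧
      rho P Q (fun ω => X ω + Y ω) = rho P Q X + rho P Q Y := by
  classical
  have hΩ : Nonempty Ω := by
    rcases isEmpty_or_nonempty Ω with h | h
    · exfalso
      have h1 : P univ = 1 := measure_univ
      rw [Set.univ_eq_empty_iff.2 h, measure_empty] at h1
      exact zero_ne_one h1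
    · exact h
  obtain ⟨ω₀⟩ := hΩ
  set Z : Ω → ℝ := fun ω => X ω + Y ω with hZdef
  have hZ : Measurable Z := hX.add hY
  have hZω : ∀ ω, Z ω = X ω + Y ω := fun ω => rfl
  have key : ∀ ω ω' : Ω, X ω ≤ X ω' + max (Z ω - Z ω') 0 := by
    intro ω ω'
    rcases le_or_gt (X ω) (X ω') with h | h
    · have := le_max_right (Z ω - Z ω') 0; linarith
    · have hY' : Y ω' ≤ Y ω := by nlinarith [hcom ω ω']
      have := le_max_left (Z ω - Z ω') 0
      rw [hZω ω, hZω ω'] at this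
      linarith
  have hmax3 : ∀ a b c : ℝ, max (a - c) 0 ≤ max (a - b) 0 + max (b - c) 0 := by
    intro a b c
    apply max_le
    · have h1 := le_max_left (a - b) 0
      have h2 := le_max_left (b - c) 0
      linarith
    · positivity
  set f : ℝ → ℝ := fun z => sInf (range fun ω => X ω + max (z - Z ω) 0) with hfdef
  have hbddf : ∀ z : ℝ, BddBelow (range fun ω => X ω + max (z - Z ω) 0) := by
    intro z
    refine ⟨X ω₀ - max (Z ω₀ - z) 0, ?_⟩
    rintro _ ⟨ω, rfl⟩
    beta_reduce
    have h1 := key ω₀ ω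
    have h2 := hmax3 (Z ω₀) z (Z ω)
    linarith
  have hfZ : ∀ ω, f (Z ω) = X ω := by
    intro ω
    apply le_antisymm
    · have h0 : X ω + max (Z ω - Z ω) 0 = X ω := by simp
      calc f (Z ω) ≤ X ω + max (Z ω - Z ω) 0 := csInf_le (hbddf _) (mem_range_self ω)
        _ = X ω := h0
    · refine le_csInf ⟨_, mem_range_self ω⟩ ?_
      rintro _ ⟨ω', rfl⟩
      beta_reduce
      exact key ω ω'
  have hfmono : Monotone f := by
    intro z z' hzz'
    refine le_csInf ⟨_, mem_range_self ω₀⟩ ?_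
    rintro _ ⟨ω, rfl⟩
    beta_reduce
    refine le_trans (csInf_le (hbddf z) (mem_range_self ω)) ?_
    have : max (z - Z ω) 0 ≤ max (z' - Z ω) 0 := max_le_max (by linarith) le_rfl
    linarith
  have hflip : ∀ z z' : ℝ, z ≤ z' → f z' ≤ f z + (z' - z) := by
    intro z z' hzz'
    have hlb : ∀ w ∈ range (fun ω => X ω + max (z - Z ω) 0), f z' - (z' - z) ≤ w := by
      rintro _ ⟨ω, rfl⟩
      beta_reduce
      have h1 : f z' ≤ X ω + max (z' - Z ω) 0 := csInf_le (hbddf _) (mem_range_self ω)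
      have h2 : max (z' - Z ω) 0 ≤ max (z - Z ω) 0 + (z' - z) := by
        apply max_le
        · have := le_max_left (z - Z ω) 0; linarith
        · have := le_max_right (z - Z ω) 0; linarith
      linarith
    have h3 := le_csInf ⟨_, mem_range_self ω₀⟩ hlb
    linarith
  have hfcont : Continuous f := by
    have hl : LipschitzWith 1 f := by
      apply LipschitzWith.of_dist_le_mul
      intro a b
      rw [Real.dist_eq, Real.dist_eq, NNReal.coe_one, one_mul]
      rcases le_total a b with h | h
      · have h1 : f a ≤ f b := hfmono h
        have h2 : f b ≤ f a + (b - a) := hflip a b h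
        rw [abs_sub_comm (f a) (f b), abs_sub_comm a b,
          abs_of_nonneg (by linarith), abs_of_nonneg (by linarith)]
        linarith
      · have h1 : f b ≤ f a := hfmono h
        have h2 : f a ≤ f b + (a - b) := hflip b a h
        rw [abs_of_nonneg (by linarith), abs_of_nonneg (by linarith)]
        linarith
    exact hl.continuous
  set g : ℝ → ℝ := fun z => z - f z with hgdef
  have hgmono : Monotone g := by
    intro z z' h
    have := hflip z z' h
    simp only [hgdef]
    linarith
  have hgcont : Continuous g := continuous_id.sub hfcont
  have hgZ : ∀ ω, g (Z ω) = Y ω := by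
    intro ω
    simp only [hgdef]
    rw [hfZ ω, hZω ω]
    ring
  have hqadd : ∀ u ∈ Ioo (0:ℝ) 1,
      quantile P Z u = quantile P X u + quantile P Y u := by
    intro u hu
    have hXf : X = fun ω => f (Z ω) := funext fun ω => (hfZ ω).symm
    have hYg : Y = fun ω => g (Z ω) := funext fun ω => (hgZ ω).symm
    conv_rhs => rw [hXf, hYg]
    rw [quantile_comp' P hZ hfmono hfcont hu.1 hu.2,
        quantile_comp' P hZ hgmono hgcont hu.1 hu.2]
    simp only [hgdef]
    ring
  -- measurability
  have hq1m : AEMeasurable (quantile P X) (Q.restrict (Ioo 0 1)) :=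
    aemeasurable_restrict_of_monotoneOn measurableSet_Ioo (quantile_monotoneOn' P hX)
  have hq2m : AEMeasurable (quantile P Y) (Q.restrict (Ioo 0 1)) :=
    aemeasurable_restrict_of_monotoneOn measurableSet_Ioo (quantile_monotoneOn' P hY)
  have hmpos : Measurable (fun x : ℝ => ENNReal.ofReal (max x 0)) :=
    ENNReal.measurable_ofReal.comp (measurable_id.max measurable_const)
  have hmneg : Measurable (fun x : ℝ => ENNReal.ofReal (max (-x) 0)) :=
    ENNReal.measurable_ofReal.comp (measurable_neg.max measurable_const)
  have m1 : AEMeasurable (fun u => ENNReal.ofReal (max (quantile P X u + quantile P Y u) 0))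
      (Q.restrict (Ioo 0 1)) := hmpos.comp_aemeasurable (hq1m.add hq2m)
  have m2 : AEMeasurable (fun u => ENNReal.ofReal (max (-(quantile P X u)) 0))
      (Q.restrict (Ioo 0 1)) := hmneg.comp_aemeasurable hq1m
  have m3 : AEMeasurable (fun u => ENNReal.ofReal (max (-(quantile P Y u)) 0))
      (Q.restrict (Ioo 0 1)) := hmneg.comp_aemeasurable hq2m
  have m4 : AEMeasurable (fun u => ENNReal.ofReal (max (quantile P X u) 0))
      (Q.restrict (Ioo 0 1)) := hmpos.comp_aemeasurable hq1m
  have m5 : AEMeasurable (fun u => ENNReal.ofReal (max (quantile P Y u) 0))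
      (Q.restrict (Ioo 0 1)) := hmpos.comp_aemeasurable hq2m
  -- congruences
  have hcongrA : ∫⁻ u in Ioo (0:ℝ) 1, ENNReal.ofReal (max (quantile P Z u) 0) ∂Q
      = ∫⁻ u in Ioo (0:ℝ) 1,
          ENNReal.ofReal (max (quantile P X u + quantile P Y u) 0) ∂Q :=
    setLIntegral_congr_fun measurableSet_Ioo
      (fun u hu => by simp only [hqadd u hu])
  have hcongrB : ∫⁻ u in Ioo (0:ℝ) 1, ENNReal.ofReal (max (-(quantile P Z u)) 0) ∂Q
      = ∫⁻ u in Ioo (0:ℝ) 1,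
          ENNReal.ofReal (max (-(quantile P X u + quantile P Y u)) 0) ∂Q :=
    setLIntegral_congr_fun measurableSet_Ioo
      (fun u hu => by simp only [hqadd u hu])
  -- memLQ
  have hsum_le : ∀ u : ℝ, ENNReal.ofReal (max (quantile P X u + quantile P Y u) 0)
      ≤ ENNReal.ofReal (max (quantile P X u) 0) + ENNReal.ofReal (max (quantile P Y u) 0) := by
    intro u
    rw [← ENNReal.ofReal_add (le_max_right _ _) (le_max_right _ _)]
    apply ENNReal.ofReal_le_ofReal
    apply max_le
    · exact add_le_add (le_max_left _ _) (le_max_left _ _)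
    · positivity
  have hmemZ : memLQ P Q Z := by
    show (∫⁻ u in Ioo (0:ℝ) 1, ENNReal.ofReal (max (quantile P Z u) 0) ∂Q) < ⊤
    rw [hcongrA]
    calc ∫⁻ u in Ioo (0:ℝ) 1,
          ENNReal.ofReal (max (quantile P X u + quantile P Y u) 0) ∂Q
        ≤ ∫⁻ u in Ioo (0:ℝ) 1, (ENNReal.ofReal (max (quantile P X u) 0)
            + ENNReal.ofReal (max (quantile P Y u) 0)) ∂Q :=
          lintegral_mono fun u => hsum_le u
      _ = (∫⁻ u in Ioo (0:ℝ) 1, ENNReal.ofReal (max (quantile P X u) 0) ∂Q)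
            + ∫⁻ u in Ioo (0:ℝ) 1, ENNReal.ofReal (max (quantile P Y u) 0) ∂Q :=
          lintegral_add_left' m4 _
      _ < ⊤ := ENNReal.add_lt_top.2 ⟨hXQ, hYQ⟩
  refine ⟨hmemZ, ?_⟩
  simp only [rho]
  -- key integral identity
  have hreal : ∀ a b : ℝ, max (a + b) 0 + max (-a) 0 + max (-b) 0
      = max a 0 + max b 0 + max (-(a+b)) 0 := by
    intro a b
    simp only [max_def]
    split_ifs <;> linarith
  have e1 : ∫⁻ u in Ioo (0:ℝ) 1,
        (ENNReal.ofReal (max (quantile P X u + quantile P Y u) 0)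
          + ENNReal.ofReal (max (-(quantile P X u)) 0)
          + ENNReal.ofReal (max (-(quantile P Y u)) 0)) ∂Q
      = (∫⁻ u in Ioo (0:ℝ) 1,
            ENNReal.ofReal (max (quantile P X u + quantile P Y u) 0) ∂Q)
        + (∫⁻ u in Ioo (0:ℝ) 1, ENNReal.ofReal (max (-(quantile P X u)) 0) ∂Q)
        + (∫⁻ u in Ioo (0:ℝ) 1, ENNReal.ofReal (max (-(quantile P Y u)) 0) ∂Q) := by
    rw [lintegral_add_left' (f := fun u => ENNReal.ofReal (max (quantile P X u + quantile P Y u) 0)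
        + ENNReal.ofReal (max (-(quantile P X u)) 0)) (m1.add m2), lintegral_add_left' m1]
  have e2 : ∫⁻ u in Ioo (0:ℝ) 1,
        (ENNReal.ofReal (max (quantile P X u) 0)
          + ENNReal.ofReal (max (quantile P Y u) 0)
          + ENNReal.ofReal (max (-(quantile P X u + quantile P Y u)) 0)) ∂Q
      = (∫⁻ u in Ioo (0:ℝ) 1, ENNReal.ofReal (max (quantile P X u) 0) ∂Q)
        + (∫⁻ u in Ioo (0:ℝ) 1, ENNReal.ofReal (max (quantile P Y u) 0) ∂Q)
        + (∫⁻ u in Ioo (0:ℝ) 1,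
            ENNReal.ofReal (max (-(quantile P X u + quantile P Y u)) 0) ∂Q) := by
    rw [lintegral_add_left' (f := fun u => ENNReal.ofReal (max (quantile P X u) 0)
        + ENNReal.ofReal (max (quantile P Y u) 0)) (m4.add m5), lintegral_add_left' m4]
  have hkey : (∫⁻ u in Ioo (0:ℝ) 1, ENNReal.ofReal (max (quantile P Z u) 0) ∂Q)
        + (∫⁻ u in Ioo (0:ℝ) 1, ENNReal.ofReal (max (-(quantile P X u)) 0) ∂Q)
        + (∫⁻ u in Ioo (0:ℝ) 1, ENNReal.ofReal (max (-(quantile P Y u)) 0) ∂Q)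
      = (∫⁻ u in Ioo (0:ℝ) 1, ENNReal.ofReal (max (quantile P X u) 0) ∂Q)
        + (∫⁻ u in Ioo (0:ℝ) 1, ENNReal.ofReal (max (quantile P Y u) 0) ∂Q)
        + (∫⁻ u in Ioo (0:ℝ) 1, ENNReal.ofReal (max (-(quantile P Z u)) 0) ∂Q) := by
    rw [hcongrA, hcongrB, ← e1, ← e2]
    apply lintegral_congr
    intro u
    rw [← ENNReal.ofReal_add (by positivity) (by positivity),
        ← ENNReal.ofReal_add (by positivity) (by positivity),
        ← ENNReal.ofReal_add (by positivity) (by positivity),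
        ← ENNReal.ofReal_add (by positivity) (by positivity)]
    exact congrArg ENNReal.ofReal (hreal _ _)
  -- notation
  set A := ∫⁻ u in Ioo (0:ℝ) 1, ENNReal.ofReal (max (quantile P Z u) 0) ∂Q with hA
  set B := ∫⁻ u in Ioo (0:ℝ) 1, ENNReal.ofReal (max (-(quantile P Z u)) 0) ∂Q with hB
  set A1 := ∫⁻ u in Ioo (0:ℝ) 1, ENNReal.ofReal (max (quantile P X u) 0) ∂Q with hA1
  set B1 := ∫⁻ u in Ioo (0:ℝ) 1, ENNReal.ofReal (max (-(quantile P X u)) 0) ∂Q with hB1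
  set A2 := ∫⁻ u in Ioo (0:ℝ) 1, ENNReal.ofReal (max (quantile P Y u) 0) ∂Q with hA2
  set B2 := ∫⁻ u in Ioo (0:ℝ) 1, ENNReal.ofReal (max (-(quantile P Y u)) 0) ∂Q with hB2
  have hAne : A ≠ ⊤ := LT.lt.ne hmemZ
  have hA1ne : A1 ≠ ⊤ := LT.lt.ne hXQ
  have hA2ne : A2 ≠ ⊤ := LT.lt.ne hYQ
  by_cases hB1top : B1 = ⊤
  · have hBtop : B = ⊤ := by
      by_contra hBne
      have : A1 + A2 + B ≠ ⊤ :=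
        ENNReal.add_ne_top.2 ⟨ENNReal.add_ne_top.2 ⟨hA1ne, hA2ne⟩, hBne⟩
      rw [← hkey] at this
      exact this (by rw [hB1top]; simp)
    rw [hBtop, hB1top]
    simp [EReal.coe_ennreal_top, EReal.sub_top, EReal.bot_add, EReal.add_bot]
  by_cases hB2top : B2 = ⊤
  · have hBtop : B = ⊤ := by
      by_contra hBne
      have : A1 + A2 + B ≠ ⊤ :=
        ENNReal.add_ne_top.2 ⟨ENNReal.add_ne_top.2 ⟨hA1ne, hA2ne⟩, hBne⟩
      rw [← hkey] at this
      exact this (by rw [hB2top]; simp)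
    rw [hBtop, hB2top]
    simp [EReal.coe_ennreal_top, EReal.sub_top, EReal.bot_add, EReal.add_bot]
  -- all finite
  have hBne : B ≠ ⊤ := by
    have h1 : B ≤ A1 + A2 + B := le_add_self
    rw [← hkey] at h1
    exact ne_top_of_le_ne_top
      (ENNReal.add_ne_top.2 ⟨ENNReal.add_ne_top.2 ⟨hAne, hB1top⟩, hB2top⟩) h1
  have htr := congrArg ENNReal.toReal hkey
  rw [ENNReal.toReal_add (ENNReal.add_ne_top.2 ⟨hAne, hB1top⟩) hB2top,
      ENNReal.toReal_add hAne hB1top,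
      ENNReal.toReal_add (ENNReal.add_ne_top.2 ⟨hA1ne, hA2ne⟩) hBne,
      ENNReal.toReal_add hA1ne hA2ne] at htr
  have cv : ∀ x : ENNReal, x ≠ ⊤ → (x : EReal) = ((x.toReal : ℝ) : EReal) := by
    intro x hx
    have h1 : (x : EReal) ≠ ⊤ := by
      simp only [ne_eq, EReal.coe_ennreal_eq_top_iff]
      exact hx
    have h2 : (x : EReal) ≠ ⊥ := by simp
    rw [← EReal.coe_toReal h1 h2, EReal.toReal_coe_ennreal]
  rw [cv A hAne, cv B hBne, cv A1 hA1ne, cv B1 hB1top, cv A2 hA2ne, cv B2 hB2top,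
      ← EReal.coe_sub, ← EReal.coe_sub, ← EReal.coe_sub, ← EReal.coe_add]
  have hfin : A.toReal - B.toReal
      = (A1.toReal - B1.toReal) + (A2.toReal - B2.toReal) := by linarith
  exact_mod_cast congrArg (fun r : ℝ => (r : EReal)) hfin
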